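/- Let σ, p, q, k, m, c be real numbers with c·(p+q) ≠ 0 and c + k + 4σk²m = 0, let a₀ ∈ ℝ, let I ⊆ ℝ be an open set, and let Φ : ℝ → ℝ be differentiable on I with Φ'(ξ) = σ + Φ(ξ)² for all ξ ∈ I. Define u(x,y,t) = a₀ - (12km/(c(p+q)))·Φ(ct + kx + my). Then u satisfies the shallow water wave equation u_{xt} + u_{xx} = u_{xxxy} + p·u_x·u_{xt} + q·u_t·u_{xx} at every point (x,y,t) with ct + kx + my ∈ I (where moreover Φ is four times differentiable on I, as follows automatically from the Riccati equation). -/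

import Mathlib

open Filter

private lemma deriv_comp_eq {F G L : ℝ → ℝ} {a z : ℝ}
    (hF : HasDerivAt F (G (L z)) (L z)) (hL : HasDerivAt L a z) :
    deriv (fun w => F (L w)) z = a * G (L z) := by
  have h : HasDerivAt (fun w => F (L w)) (G (L z) * a) z := HasDerivAt.comp z hF hL
  rw [h.deriv]; ring

private lemma deriv_comp_eventually {I : Set ℝ} (hI : IsOpen I) {F G L : ℝ → ℝ} {a x : ℝ}
    (hFG : ∀ s ∈ I, HasDerivAt F (G s) s)
    (hL : ∀ z : ℝ, HasDerivAt L a z) (hx : L x ∈ I) :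
    deriv (fun w => F (L w)) =ᶠ[nhds x] fun w => a * G (L w) := by
  have hcont : Continuous L :=
    continuous_iff_continuousAt.mpr fun z => (hL z).continuousAt
  have hopen : IsOpen (L ⁻¹' I) := hI.preimage hcont
  filter_upwards [hopen.mem_nhds hx] with z hz
  exact deriv_comp_eq (hFG _ hz) (hL z)

/-- If Φ solves the Riccati equation Φ' = σ + Φ² on an open set I, c(p+q) ≠ 0 and
c + k + 4σk²m = 0, then u(x,y,t) = a₀ - (12km/(c(p+q)))·Φ(ct+kx+my) satisfies the
shallow water wave equation u_{xt} + u_{xx} = u_{xxxy} + p·u_x·u_{xt} + q·u_t·u_{xx}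
at every point (x,y,t) with ct + kx + my ∈ I. -/
theorem riccati_solution_of_SWW (σ p q k m c a₀ : ℝ)
    (h1 : c * (p + q) ≠ 0) (h2 : c + k + 4 * σ * k ^ 2 * m = 0)
    (I : Set ℝ) (hI : IsOpen I) (Φ : ℝ → ℝ)
    (hΦ : ∀ ξ ∈ I, HasDerivAt Φ (σ + Φ ξ ^ 2) ξ)
    (u : ℝ → ℝ → ℝ → ℝ)
    (hu : ∀ x y t : ℝ,
      u x y t = a₀ - (12 * k * m / (c * (p + q))) * Φ (c * t + k * x + m * y)) :
    ∀ x y t : ℝ, c * t + k * x + m * y ∈ I →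
      deriv (fun x' : ℝ => deriv (fun t' : ℝ => u x' y t') t) x
          + deriv (deriv (fun x' : ℝ => u x' y t)) x =
        deriv (deriv (deriv (fun x' : ℝ => deriv (fun y' : ℝ => u x' y' t) y))) x
          + p * deriv (fun x' : ℝ => u x' y t) x
              * deriv (fun x' : ℝ => deriv (fun t' : ℝ => u x' y t') t) x
          + q * deriv (fun t' : ℝ => u x y t') t
              * deriv (deriv (fun x' : ℝ => u x' y t)) x := by
  intro x y t hmem
  set A := 12 * k * m / (c * (p + q)) with hA
  have hA' : A * (c * (p + q)) = 12 * k * m := div_mul_cancel₀ _ h1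
  simp only [hu]
  set z₀ := c * t + k * x + m * y with hz₀
  -- derivative chain
  have h0 : ∀ s ∈ I, HasDerivAt (fun s => a₀ - A * Φ s) (-(A * (σ + Φ s ^ 2))) s :=
    fun s hs => ((hΦ s hs).const_mul A).const_sub a₀
  have h1d : ∀ s ∈ I, HasDerivAt (fun s => -(A * (σ + Φ s ^ 2)))
      (-(A * (2 * Φ s * (σ + Φ s ^ 2)))) s := by
    intro s hs
    have h := ((((hΦ s hs).fun_pow 2).const_add σ).const_mul A).fun_neg
    convert h using 1
    · rfl
    · rfl
    push_cast
    ring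
  have h2d : ∀ s ∈ I, HasDerivAt (fun s => -(A * (2 * Φ s * (σ + Φ s ^ 2))))
      (-(A * (2 * (σ + Φ s ^ 2) ^ 2 + 4 * Φ s ^ 2 * (σ + Φ s ^ 2)))) s := by
    intro s hs
    have hb := ((hΦ s hs).const_mul 2).fun_mul (((hΦ s hs).fun_pow 2).const_add σ)
    have h := (hb.const_mul A).fun_neg
    convert h using 1
    · rfl
    · rfl
    push_cast
    ring
  have h3d : ∀ s ∈ I, HasDerivAt
      (fun s => -(A * (2 * (σ + Φ s ^ 2) ^ 2 + 4 * Φ s ^ 2 * (σ + Φ s ^ 2))))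
      (-(A * (16 * Φ s * (σ + Φ s ^ 2) ^ 2 + 8 * Φ s ^ 3 * (σ + Φ s ^ 2)))) s := by
    intro s hs
    have p1 := ((hΦ s hs).fun_pow 2).const_add σ
    have hb := ((p1.fun_pow 2).const_mul 2).fun_add ((((hΦ s hs).fun_pow 2).const_mul 4).fun_mul p1)
    have h := (hb.const_mul A).fun_neg
    convert h using 1
    · rfl
    · rfl
    push_cast
    ring
  -- affine maps
  have hLx : ∀ z : ℝ, HasDerivAt (fun x' : ℝ => c * t + k * x' + m * y) k z := by
    intro z
    simpa using (((hasDerivAt_id z).const_mul k).const_add (c * t)).add_const (m * y)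
  have hLt : ∀ x' z : ℝ, HasDerivAt (fun t' : ℝ => c * t' + k * x' + m * y) c z := by
    intro x' z
    simpa using (((hasDerivAt_id z).const_mul c).add_const (k * x')).add_const (m * y)
  have hLy : ∀ x' z : ℝ, HasDerivAt (fun y' : ℝ => c * t + k * x' + m * y') m z := by
    intro x' z
    simpa using ((hasDerivAt_id z).const_mul m).const_add (c * t + k * x')
  have hJ : IsOpen {x' : ℝ | c * t + k * x' + m * y ∈ I} := by
    have hc : Continuous fun x' : ℝ => c * t + k * x' + m * y :=
      continuous_iff_continuousAt.mpr fun z => (hLx z).continuousAt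
    exact hI.preimage hc
  have hxJ : x ∈ {x' : ℝ | c * t + k * x' + m * y ∈ I} := hmem
  -- u_x
  have dux : deriv (fun x' => a₀ - A * Φ (c * t + k * x' + m * y)) x
      = k * -(A * (σ + Φ z₀ ^ 2)) :=
    deriv_comp_eq (F := fun s => a₀ - A * Φ s) (G := fun s => -(A * (σ + Φ s ^ 2)))
      (h0 _ hmem) (hLx x)
  -- u_t
  have dut : deriv (fun t' => a₀ - A * Φ (c * t' + k * x + m * y)) t
      = c * -(A * (σ + Φ z₀ ^ 2)) :=
    deriv_comp_eq (F := fun s => a₀ - A * Φ s) (G := fun s => -(A * (σ + Φ s ^ 2)))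
      (h0 _ hmem) (hLt x t)
  -- u_xt
  have ev1 : (fun x' => deriv (fun t' => a₀ - A * Φ (c * t' + k * x' + m * y)) t)
      =ᶠ[nhds x] fun x' => c * -(A * (σ + Φ (c * t + k * x' + m * y) ^ 2)) := by
    filter_upwards [hJ.mem_nhds hxJ] with x' hx'
    exact deriv_comp_eq (F := fun s => a₀ - A * Φ s)
      (G := fun s => -(A * (σ + Φ s ^ 2))) (h0 _ hx') (hLt x' t)
  have duxt : deriv (fun x' => deriv (fun t' => a₀ - A * Φ (c * t' + k * x' + m * y)) t) x
      = k * (c * -(A * (2 * Φ z₀ * (σ + Φ z₀ ^ 2)))) := by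
    rw [ev1.deriv_eq]
    exact deriv_comp_eq (F := fun s => c * -(A * (σ + Φ s ^ 2)))
      (G := fun s => c * -(A * (2 * Φ s * (σ + Φ s ^ 2))))
      ((h1d z₀ hmem).const_mul c) (hLx x)
  -- u_xx
  have ev2 : deriv (fun x' => a₀ - A * Φ (c * t + k * x' + m * y))
      =ᶠ[nhds x] fun x' => k * -(A * (σ + Φ (c * t + k * x' + m * y) ^ 2)) :=
    deriv_comp_eventually hI (F := fun s => a₀ - A * Φ s)
      (G := fun s => -(A * (σ + Φ s ^ 2))) h0 hLx hmem
  have duxx : deriv (deriv (fun x' => a₀ - A * Φ (c * t + k * x' + m * y))) x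
      = k * (k * -(A * (2 * Φ z₀ * (σ + Φ z₀ ^ 2)))) := by
    rw [ev2.deriv_eq]
    exact deriv_comp_eq (F := fun s => k * -(A * (σ + Φ s ^ 2)))
      (G := fun s => k * -(A * (2 * Φ s * (σ + Φ s ^ 2))))
      ((h1d z₀ hmem).const_mul k) (hLx x)
  -- u_xxxy
  have ev3a : (fun x' => deriv (fun y' => a₀ - A * Φ (c * t + k * x' + m * y')) y)
      =ᶠ[nhds x] fun x' => m * -(A * (σ + Φ (c * t + k * x' + m * y) ^ 2)) := by
    filter_upwards [hJ.mem_nhds hxJ] with x' hx'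
    exact deriv_comp_eq (F := fun s => a₀ - A * Φ s)
      (G := fun s => -(A * (σ + Φ s ^ 2))) (h0 _ hx') (hLy x' y)
  have ev3b : deriv (fun x' => m * -(A * (σ + Φ (c * t + k * x' + m * y) ^ 2)))
      =ᶠ[nhds x] fun x' => k * (m * -(A * (2 * Φ (c * t + k * x' + m * y)
        * (σ + Φ (c * t + k * x' + m * y) ^ 2)))) :=
    deriv_comp_eventually hI (F := fun s => m * -(A * (σ + Φ s ^ 2)))
      (G := fun s => m * -(A * (2 * Φ s * (σ + Φ s ^ 2))))
      (fun s hs => (h1d s hs).const_mul m) hLx hmem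
  have ev3c : deriv (fun x' => k * (m * -(A * (2 * Φ (c * t + k * x' + m * y)
        * (σ + Φ (c * t + k * x' + m * y) ^ 2)))))
      =ᶠ[nhds x] fun x' => k * (k * (m * -(A * (2 * (σ + Φ (c * t + k * x' + m * y) ^ 2) ^ 2
        + 4 * Φ (c * t + k * x' + m * y) ^ 2 * (σ + Φ (c * t + k * x' + m * y) ^ 2))))) :=
    deriv_comp_eventually hI (F := fun s => k * (m * -(A * (2 * Φ s * (σ + Φ s ^ 2)))))
      (G := fun s => k * (m * -(A * (2 * (σ + Φ s ^ 2) ^ 2 + 4 * Φ s ^ 2 * (σ + Φ s ^ 2)))))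
      (fun s hs => ((h2d s hs).const_mul m).const_mul k) hLx hmem
  have duxxxy : deriv (deriv (deriv
        (fun x' => deriv (fun y' => a₀ - A * Φ (c * t + k * x' + m * y')) y))) x
      = k * (k * (k * (m * -(A * (16 * Φ z₀ * (σ + Φ z₀ ^ 2) ^ 2
          + 8 * Φ z₀ ^ 3 * (σ + Φ z₀ ^ 2)))))) := by
    have e1 := ev3a.deriv.trans ev3b
    have e2 := e1.deriv.trans ev3c
    rw [e2.deriv_eq]
    exact deriv_comp_eq
      (F := fun s => k * (k * (m * -(A * (2 * (σ + Φ s ^ 2) ^ 2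
        + 4 * Φ s ^ 2 * (σ + Φ s ^ 2))))))
      (G := fun s => k * (k * (m * -(A * (16 * Φ s * (σ + Φ s ^ 2) ^ 2
        + 8 * Φ s ^ 3 * (σ + Φ s ^ 2))))))
      ((((h3d z₀ hmem).const_mul m).const_mul k).const_mul k) (hLx x)
  rw [duxt, duxx, duxxxy, dux, dut]
  linear_combination (-2 * A * Φ z₀ * (σ + Φ z₀ ^ 2) * k) * h2
    + (-2 * A * Φ z₀ * (σ + Φ z₀ ^ 2) ^ 2 * k ^ 2) * hA'
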